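/- Under the MNL choice model with exit option γ, the pairwise policy matching patient i to provider v_i (for patients with v_i ≥ 0) achieves match rate (1/N)·Σ_{i: v_i ≥ 0} exp(θ_{i,v_i})/(exp(θ_{i,v_i}) + exp(γ)), and its expected match quality is at least (1/N)·Σ_i exp(θ_{i,v_i})/(exp(θ_{i,v_i})+exp(γ)) times the optimal expected match quality. -/

import Mathlib

open Finset

lemma sum_prod_bool' {ι : Type*} [Fintype ι] [DecidableEq ι] (g : ι → Bool → ℝ) :
    ∑ c : ι → Bool, ∏ i, g i (c i) = ∏ i, (g i true + g i false) := by
  rw [← Fintype.prod_sum]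
  exact Finset.prod_congr rfl fun i _ => by simp [add_comm]

lemma key_exp {ι : Type*} [Fintype ι] [DecidableEq ι] (p f : ι → ℝ) :
    ∑ c : ι → Bool, (∏ i, if c i then p i else 1 - p i) * (∑ i, if c i then f i else 0)
      = ∑ i, p i * f i := by
  classical
  simp_rw [Finset.mul_sum]
  rw [Finset.sum_comm]
  refine Finset.sum_congr rfl fun i _ => ?_
  set G : ι → Bool → ℝ := fun j b => if b then (if j = i then p j * f j else p j)
      else (if j = i then 0 else 1 - p j) with hG
  have h1 : ∀ c : ι → Bool,
      (∏ j, if c j then p j else 1 - p j) * (if c i then f i else 0)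
        = ∏ j, G j (c j) := by
    intro c
    cases hc : c i with
    | false =>
      rw [if_neg (by simp), mul_zero]
      exact (Finset.prod_eq_zero (Finset.mem_univ i) (by simp [hG, hc])).symm
    | true =>
      rw [Fintype.prod_eq_mul_prod_compl i (fun j => if c j then p j else 1 - p j),
        Fintype.prod_eq_mul_prod_compl i (fun j => G j (c j))]
      have h2 : G i (c i) = p i * f i := by simp [hG, hc]
      have h3 : ∀ j ∈ ({i}ᶜ : Finset ι), G j (c j) = if c j then p j else 1 - p j := by
        intro j hj
        simp only [Finset.mem_compl, Finset.mem_singleton] at hj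
        cases hcj : c j <;> simp [hG, hj]
      rw [h2, Finset.prod_congr rfl h3, hc, if_pos rfl]
      simp [hc]
      ring
  simp_rw [h1]
  rw [sum_prod_bool']
  rw [Finset.prod_eq_single i (fun j _ hj => by simp [hG]; rw [if_neg hj, if_neg hj]; ring)
    (fun h => absurd (Finset.mem_univ i) h)]
  simp [hG]

lemma mnl_mono (γ : ℝ) {a b : ℝ} (h : a ≤ b) :
    Real.exp a / (Real.exp a + Real.exp γ) ≤ Real.exp b / (Real.exp b + Real.exp γ) := by
  rw [div_le_div_iff₀ (by positivity) (by positivity)]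
  have h1 := Real.exp_le_exp.2 h
  have h2 := Real.exp_pos γ
  have h3 := Real.exp_pos a
  nlinarith

/-- `θ`-quality of the provider assigned to patient `i` (0 if unassigned). -/
def qualAt {N M : ℕ} (θ : Fin N → Fin M → ℝ) (v : Fin N → Option (Fin M)) (i : Fin N) : ℝ :=
  match v i with
  | some j => θ i j
  | none => 0

/-- MNL acceptance probability of patient `i` for their (singleton) offer: a patient
offered provider `j` selects it with probability `exp(θ_{i,j})/(exp(θ_{i,j})+exp γ)`
and abstains otherwise; patients with no offer never match. -/
noncomputable def mnlProb {N M : ℕ} (γ : ℝ) (θ : Fin N → Fin M → ℝ) (v : Fin N → Option (Fin M))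
    (i : Fin N) : ℝ :=
  match v i with
  | some j => Real.exp (θ i j) / (Real.exp (θ i j) + Real.exp γ)
  | none => 0

/-- Under the MNL choice model with exit option `γ`, the pairwise policy given by a
maximum-weight bipartite matching `v` (patients make independent accept/abstain
decisions on their singleton offers, so the response order is irrelevant) achieves

(a) match rate `(1/N)·∑_{i : v i ≥ 0} exp(θ_{i,v_i})/(exp(θ_{i,v_i})+exp γ)`, and

(b) expected match quality at least `(1/N)·∑_i exp(θ_{i,v_i})/(exp(θ_{i,v_i})+exp γ)`
times `(1/N)` times the maximum bipartite matching weight of `θ`, which upper-bounds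
the optimal expected match quality. -/
theorem mnl_pairwise_match_rate_and_quality (N M : ℕ) (hN : 0 < N) (γ : ℝ)
    (θ : Fin N → Fin M → ℝ) (hθ : ∀ i j, θ i j ∈ Set.Icc (0 : ℝ) 1)
    (v : Fin N → Option (Fin M))
    (hinj : ∀ i i' j, v i = some j → v i' = some j → i = i')
    (hopt : ∀ w : Fin N → Option (Fin M),
      (∀ i i' j, w i = some j → w i' = some j → i = i') →
      ∑ i, qualAt θ w i ≤ ∑ i, qualAt θ v i) :
    ((∑ c : Fin N → Bool,
        (∏ i, if c i then mnlProb γ θ v i else 1 - mnlProb γ θ v i) *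
          (((Finset.univ.filter fun i => c i = true ∧ (v i).isSome).card : ℝ) / N))
      = (1 / (N : ℝ)) * ∑ i, mnlProb γ θ v i) ∧
    ((1 / (N : ℝ)) * ∑ i, mnlProb γ θ v i) * ((1 / (N : ℝ)) * ∑ i, qualAt θ v i)
      ≤ ∑ c : Fin N → Bool,
          (∏ i, if c i then mnlProb γ θ v i else 1 - mnlProb γ θ v i) *
            ((1 / (N : ℝ)) * ∑ i, if c i = true then qualAt θ v i else 0) := by
  have hN' : (0 : ℝ) < N := by exact_mod_cast hN
  set p : Fin N → ℝ := fun i => mnlProb γ θ v i with hp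
  set q : Fin N → ℝ := fun i => qualAt θ v i with hq
  constructor
  · -- part (a)
    have ha : (∑ c : Fin N → Bool,
        (∏ i, if c i then p i else 1 - p i) *
          (((Finset.univ.filter fun i => c i = true ∧ (v i).isSome).card : ℝ) / N))
        = (1 / (N : ℝ)) * ∑ c : Fin N → Bool,
            (∏ i, if c i then p i else 1 - p i) *
              (∑ i, if c i then (if (v i).isSome then (1:ℝ) else 0) else 0) := by
      rw [Finset.mul_sum]
      refine Finset.sum_congr rfl fun c _ => ?_
      rw [Finset.card_filter, Nat.cast_sum]
      simp_rw [apply_ite (Nat.cast : ℕ → ℝ), Nat.cast_one, Nat.cast_zero, ite_and]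
      ring
    rw [ha, key_exp]
    congr 1
    refine Finset.sum_congr rfl fun i _ => ?_
    cases h : v i with
    | none => simp [hp, mnlProb, h]
    | some j => simp [h]
  · -- part (b)
    have hb : (∑ c : Fin N → Bool,
        (∏ i, if c i then p i else 1 - p i) *
          ((1 / (N : ℝ)) * ∑ i, if c i = true then q i else 0))
        = (1 / (N : ℝ)) * ∑ i, p i * q i := by
      rw [← key_exp p q, Finset.mul_sum]
      refine Finset.sum_congr rfl fun c _ => ?_
      ring
    rw [hb]
    have hmono : Monovary p q := by
      intro i j hij
      cases hj : v i with
      | none =>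
        have hpi : p i = 0 := by simp [hp, mnlProb, hj]
        rw [hpi]
        cases hi : v j with
        | none => simp [hp, mnlProb, hi]
        | some b => simp only [hp, mnlProb, hi]; positivity
      | some a =>
        cases hi : v j with
        | none =>
          exfalso
          have h1 : q j = 0 := by simp [hq, qualAt, hi]
          have h2 : (0:ℝ) ≤ q i := by
            simp only [hq, qualAt, hj]
            exact (hθ i a).1
          rw [h1] at hij
          exact absurd hij (not_lt_of_ge h2)
        | some b =>
          have hab : θ i a ≤ θ j b := by
            have := hij
            simp only [hq, qualAt, hj, hi] at this
            exact this.le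
          simp only [hp, mnlProb, hj, hi]
          exact mnl_mono γ hab
    have cheb := hmono.sum_mul_sum_le_card_mul_sum
    rw [Fintype.card_fin] at cheb
    calc ((1 / (N : ℝ)) * ∑ i, p i) * ((1 / (N : ℝ)) * ∑ i, q i)
        = ((∑ i, p i) * ∑ i, q i) * (1 / ((N:ℝ) * N)) := by
          field_simp
      _ ≤ ((N:ℝ) * ∑ i, p i * q i) * (1 / ((N:ℝ) * N)) := by
          apply mul_le_mul_of_nonneg_right cheb
          positivity
      _ = (1 / (N : ℝ)) * ∑ i, p i * q i := by
          field_simp
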